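/- Let Y₀, …, Y_k and T be compact subsets of P(ω) and let b ⊆ ω. Suppose that for every (a₀, …, a_k) ∈ Y₀ × ⋯ × Y_k and every c ∈ T, the set b ∩ c ∩ (ω \ a₀) ∩ ⋯ ∩ (ω \ a_k) is infinite. Then for every l ∈ ω there is a finite set s ⊆ b \ l such that for every (a₀, …, a_k) ∈ Y₀ × ⋯ × Y_k and every c ∈ T, s ∩ c ∩ (ω \ a₀) ∩ ⋯ ∩ (ω \ a_k) ≠ ∅. -/

import Mathlib

open scoped Classical

/-- The characteristic function of `a ⊆ ω`, identifying `P(ω)` with Cantor space `2^ω`. -/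
noncomputable def chi (a : Set ℕ) : ℕ → Bool := fun n => if n ∈ a then true else false

/-- A family of subsets of `ω` is closed when viewed as a subset of Cantor space. -/
def CantorClosed (C : Set (Set ℕ)) : Prop := IsClosed (chi '' C)

/-- A family of subsets of `ω` is compact when viewed as a subset of Cantor space. -/
def CantorCompact (C : Set (Set ℕ)) : Prop := IsCompact (chi '' C)

/-- A compactness argument: if every selection from the compact sets `Y i` and `T`
leaves `b ∩ c ∩ ⋂ᵢ (a i)ᶜ` infinite, then for each `l` a single finite `s ⊆ b \ l`
meets all such intersections. -/
theorem compactness_selection (k : ℕ) (Y : Fin (k + 1) → Set (Set ℕ)) (T : Set (Set ℕ))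
    (hY : ∀ i, CantorCompact (Y i)) (hT : CantorCompact T) (b : Set ℕ)
    (hinf : ∀ a : Fin (k + 1) → Set ℕ, (∀ i, a i ∈ Y i) → ∀ c ∈ T,
      (b ∩ c ∩ ⋂ i, (a i)ᶜ).Infinite) :
    ∀ l : ℕ, ∃ s : Finset ℕ, (↑s : Set ℕ) ⊆ b ∧ (∀ m ∈ s, l ≤ m) ∧
      ∀ a : Fin (k + 1) → Set ℕ, (∀ i, a i ∈ Y i) → ∀ c ∈ T,
        ((↑s : Set ℕ) ∩ c ∩ ⋂ i, (a i)ᶜ).Nonempty := by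
  intro l
  -- the compact product space
  set X := (Fin (k + 1) → (ℕ → Bool)) × (ℕ → Bool)
  set K : Set X := (Set.univ.pi fun i => chi '' Y i) ×ˢ (chi '' T) with hK
  have hKc : IsCompact K := (isCompact_univ_pi fun i => hY i).prod hT
  -- open cover
  set W : ℕ → Set X := fun m =>
    {p : X | m ∈ b ∧ l ≤ m ∧ p.2 m = true ∧ ∀ i, p.1 i m = false} with hW
  have hWopen : ∀ m, IsOpen (W m) := by
    intro m
    by_cases hb : m ∈ b ∧ l ≤ m
    · have : W m = {p : X | p.2 m = true} ∩ ⋂ i, {p : X | p.1 i m = false} := by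
        ext p
        simp [hW, hb.1, hb.2, Set.mem_iInter]
      rw [this]
      refine IsOpen.inter ?_ (isOpen_iInter_of_finite fun i => ?_)
      · have h1 : Continuous fun p : (Fin (k + 1) → (ℕ → Bool)) × (ℕ → Bool) => p.2 m := by fun_prop
        exact h1.isOpen_preimage ({true} : Set Bool) (isOpen_discrete _)
      · have h2 : Continuous fun p : (Fin (k + 1) → (ℕ → Bool)) × (ℕ → Bool) => p.1 i m := by fun_prop
        exact h2.isOpen_preimage ({false} : Set Bool) (isOpen_discrete _)
    · have : W m = ∅ := by
        ext p; simp only [hW, Set.mem_setOf_eq, Set.mem_empty_iff_false, iff_false]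
        tauto
      rw [this]; exact isOpen_empty
  have hcover : K ⊆ ⋃ m, W m := by
    rintro ⟨f, g⟩ ⟨hf, hg⟩
    simp only [Set.mem_pi, Set.mem_univ, forall_true_left] at hf
    choose a ha hfa using hf
    obtain ⟨c, hc, hgc⟩ := hg
    have hinfin := hinf a ha c hc
    obtain ⟨m, hm, hlm⟩ := hinfin.exists_gt l
    obtain ⟨⟨hmb, hmc⟩, hma⟩ := hm
    refine Set.mem_iUnion.2 ⟨m, hmb, hlm.le, ?_, ?_⟩
    · rw [← hgc]; simp [chi, hmc]
    · intro i
      have : m ∉ a i := by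
        have := Set.mem_iInter.1 hma i; exact this
      show f i m = false
      rw [← hfa i]; simp [chi, this]
  obtain ⟨t, ht⟩ := hKc.elim_finite_subcover W hWopen hcover
  refine ⟨t.filter (fun m => m ∈ b ∧ l ≤ m), ?_, ?_, ?_⟩
  · intro m hm
    simp only [Finset.coe_filter, Set.mem_setOf_eq] at hm
    exact hm.2.1
  · intro m hm
    exact (Finset.mem_filter.1 hm).2.2
  · intro a ha c hc
    have hp : (fun i => chi (a i), chi c) ∈ K := by
      constructor
      · intro i _; exact ⟨a i, ha i, rfl⟩
      · exact ⟨c, hc, rfl⟩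
    obtain ⟨m, hmt, hmb, hlm, hgc, hfa⟩ := Set.mem_iUnion₂.1 (ht hp)
    refine ⟨m, ⟨?_, ?_⟩, ?_⟩
    · exact Finset.mem_coe.2 (Finset.mem_filter.2 ⟨hmt, hmb, hlm⟩)
    · by_contra h; simp [chi, h] at hgc
    · refine Set.mem_iInter.2 fun i => ?_
      have := hfa i
      by_contra h
      simp only [Set.mem_compl_iff, not_not] at h
      simp [chi, h] at this
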